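/- Fix an integer n ≥ 1 and holomorphic functions a,b,c,d : Δ → ℂ with a(0) = a'(0) = b(0) = c(0) = 0, d(0) ≠ 0, and a(z)d(z) − b(z)c(z) = z^(2n) for all z ∈ Δ; assume det F'(z) = 0 for all z ∈ Δ* where F(z) = z^(−n)·(a(z), b(z); c(z), d(z)), and assume b'(0) ≠ 0 (so the corresponding Bryant surface has a smooth end at 0). Define, on a neighborhood of 0 in Δ, the holomorphic function G(z) = (z·b'(z) − n·b(z)) / (z·d'(z) − n·d(z)) (the denominator is nonzero at 0 since it equals −n·d(0) there). Then G(0) = 0, and G'(0) ≠ 0 if and only if n ≥ 2. That is, the hyperbolic Gauss map of the Bryant surface is immersed at a smooth end if and only if the end is catenoidal (pole order n > 1) rather than horospherical (n = 1). -/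

import Mathlib

/-!
STATEMENT 19: The hyperbolic Gauss map
`G(z) = (z·b'(z) − n·b(z)) / (z·d'(z) − n·d(z))` of a Bryant surface with a
smooth end at `0` satisfies `G(0) = 0`, and is immersed at `0` (`G'(0) ≠ 0`)
iff the end is catenoidal, i.e. `n ≥ 2`.
-/

attribute [local instance] Matrix.normedAddCommGroup Matrix.normedSpace

open Metric Matrix

/-- The open unit disc in `ℂ`. -/
noncomputable def Disc : Set ℂ := Metric.ball (0 : ℂ) 1

/-- The punctured open unit disc in `ℂ`. -/
noncomputable def PDisc : Set ℂ := Metric.ball (0 : ℂ) 1 \ {0}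

theorem gauss_map_immersed_iff_catenoidal
    (n : ℕ) (hn : 1 ≤ n)
    (a b c d : ℂ → ℂ)
    (ha : DifferentiableOn ℂ a Disc) (hb : DifferentiableOn ℂ b Disc)
    (hc : DifferentiableOn ℂ c Disc) (hd : DifferentiableOn ℂ d Disc)
    (ha0 : a 0 = 0) (ha'0 : deriv a 0 = 0) (hb0 : b 0 = 0) (hc0 : c 0 = 0)
    (hd0 : d 0 ≠ 0)
    (hdet : ∀ z ∈ Disc, a z * d z - b z * c z = z ^ (2 * n))
    (F : ℂ → Matrix (Fin 2) (Fin 2) ℂ)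
    (hF : ∀ z, F z = (z ^ n)⁻¹ • !![a z, b z; c z, d z])
    (hnull : ∀ z ∈ PDisc, (deriv F z).det = 0)
    (hb' : deriv b 0 ≠ 0)
    (G : ℂ → ℂ)
    (hG : ∀ z, G z = (z * deriv b z - n * b z) / (z * deriv d z - n * d z)) :
    G 0 = 0 ∧ (deriv G 0 ≠ 0 ↔ 2 ≤ n) := by
  have h0 : (0:ℂ) ∈ Disc := by simp [Disc]
  have hmem : Disc ∈ nhds (0:ℂ) := Metric.isOpen_ball.mem_nhds h0
  have hba : AnalyticAt ℂ b 0 := hb.analyticAt hmem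
  have hda : AnalyticAt ℂ d 0 := hd.analyticAt hmem
  have hba' : AnalyticAt ℂ (deriv b) 0 := (hb.analyticOnNhd Metric.isOpen_ball).deriv 0 h0
  have hda' : AnalyticAt ℂ (deriv d) 0 := (hd.analyticOnNhd Metric.isOpen_ball).deriv 0 h0
  have hnC : (n:ℂ) ≠ 0 := Nat.cast_ne_zero.mpr (by omega)
  have hD0 : (0:ℂ) * deriv d 0 - (n:ℂ) * d 0 ≠ 0 := by
    simp only [zero_mul, zero_sub, neg_ne_zero]
    exact mul_ne_zero hnC hd0
  have hGfun : G = fun z => (z * deriv b z - (n:ℂ) * b z) / (z * deriv d z - (n:ℂ) * d z) :=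
    funext hG
  have hN : HasDerivAt (fun z : ℂ => z * deriv b z - (n:ℂ) * b z)
      ((1 * deriv b 0 + 0 * deriv (deriv b) 0) - (n : ℂ) * deriv b 0) 0 :=
    ((hasDerivAt_id 0).mul hba'.differentiableAt.hasDerivAt).sub
      (hba.differentiableAt.hasDerivAt.const_mul _)
  have hDd : HasDerivAt (fun z : ℂ => z * deriv d z - (n:ℂ) * d z)
      ((1 * deriv d 0 + 0 * deriv (deriv d) 0) - (n : ℂ) * deriv d 0) 0 :=
    ((hasDerivAt_id 0).mul hda'.differentiableAt.hasDerivAt).sub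
      (hda.differentiableAt.hasDerivAt.const_mul _)
  have hGd := hN.div hDd hD0
  constructor
  · rw [hG]; simp [hb0]
  · rw [hGfun, HasDerivAt.deriv (f := fun z : ℂ => (z * deriv b z - (n:ℂ) * b z) / (z * deriv d z - (n:ℂ) * d z)) hGd]
    simp only [hb0, mul_zero, zero_mul, sub_zero, zero_add, add_zero, one_mul, zero_sub,
      mul_zero, sub_zero]
    rw [div_ne_zero_iff, mul_ne_zero_iff]
    have h1 : deriv b 0 - (n:ℂ) * deriv b 0 = (1 - (n:ℂ)) * deriv b 0 := by ring
    have h2 : (1 - (n:ℂ)) ≠ 0 ↔ 2 ≤ n := by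
      rw [sub_ne_zero, ne_comm, Ne, Nat.cast_eq_one]
      omega
    constructor
    · rintro ⟨⟨hne, -⟩, -⟩
      rw [h1, mul_ne_zero_iff] at hne
      exact h2.mp hne.1
    · intro h
      refine ⟨⟨?_, neg_ne_zero.mpr (mul_ne_zero hnC hd0)⟩, pow_ne_zero _ ?_⟩
      · rw [h1]; exact mul_ne_zero (h2.mpr h) hb'
      · simpa using mul_ne_zero hnC hd0
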